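/- Exponential lower bound for the shell charge: if (χ, a, f, Q) is a solution of system (10) on (0,∞) with Q bounded, so that the limits Q(0⁺) and f(0⁺) as ρ → 0⁺ exist, then for every ρ > 0 one has Q(ρ) ≥ Q(0⁺) e^{−ρ}, and consequently f(ρ) − f(0⁺) ≥ Q(0⁺)(1 − e^{−ρ}). -/

import Mathlib

open Real Filter Topology Set

private lemma aux_exp_shift {q c x : ℝ} (h : c ≤ q * Real.exp x) :
    c * Real.exp (-x) ≤ q := by
  have h2 := mul_le_mul_of_nonneg_right h (Real.exp_pos (-x)).le
  rwa [mul_assoc, ← Real.exp_add, add_neg_cancel, Real.exp_zero, mul_one] at h2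

/-- Exponential lower bound for the shell charge: for a solution
`(χ, a, f, Q)` of system (10) on `(0,∞)` with `Q` bounded (so that the limits
`Q(0⁺)` and `f(0⁺)` exist), one has `Q(ρ) ≥ Q(0⁺) e^{−ρ}` and
`f(ρ) − f(0⁺) ≥ Q(0⁺)(1 − e^{−ρ})` for every `ρ > 0`. -/
theorem shell_charge_exponential_lower_bound
    (χ a f Q : ℝ → ℝ) (ε : ℝ) (hε : ε = 1 ∨ ε = -1)
    (hχ : ∀ ρ > (0:ℝ), HasDerivAt χ (a ρ + 1 - Real.cos (χ ρ)) ρ)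
    (ha : ∀ ρ > (0:ℝ), HasDerivAt a (-ε * f ρ / ρ ^ 2) ρ)
    (hf : ∀ ρ > (0:ℝ), HasDerivAt f (Q ρ) ρ)
    (hQ : ∀ ρ > (0:ℝ), HasDerivAt Q (-Q ρ * Real.sin (χ ρ)) ρ)
    (hQnn : ∀ ρ > (0:ℝ), 0 ≤ Q ρ)
    (hQbdd : ∃ M, ∀ ρ > (0:ℝ), |Q ρ| ≤ M)
    (Q0 f0 : ℝ)
    (hQ0 : Tendsto Q (𝓝[>] (0:ℝ)) (𝓝 Q0))
    (hf0 : Tendsto f (𝓝[>] (0:ℝ)) (𝓝 f0)) :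
    ∀ ρ > (0:ℝ), Q0 * Real.exp (-ρ) ≤ Q ρ ∧
      Q0 * (1 - Real.exp (-ρ)) ≤ f ρ - f0 := by
  -- g ρ = Q ρ * exp ρ has nonnegative derivative on (0, ∞)
  set g : ℝ → ℝ := fun ρ => Q ρ * Real.exp ρ with hg_def
  have hg' : ∀ x ∈ Ioi (0:ℝ), HasDerivAt g
      (-Q x * Real.sin (χ x) * Real.exp x + Q x * Real.exp x) x := fun x hx =>
    (hQ x hx).mul (Real.hasDerivAt_exp x)
  have hg'nn : ∀ x ∈ Ioi (0:ℝ), 0 ≤ -Q x * Real.sin (χ x) * Real.exp x + Q x * Real.exp x := by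
    intro x hx
    have h1 : Real.sin (χ x) ≤ 1 := Real.sin_le_one _
    have h2 : 0 ≤ Q x := hQnn x hx
    have h3 : 0 < Real.exp x := Real.exp_pos x
    have : -Q x * Real.sin (χ x) * Real.exp x + Q x * Real.exp x
        = Q x * Real.exp x * (1 - Real.sin (χ x)) := by ring
    rw [this]
    exact mul_nonneg (mul_nonneg h2 h3.le) (by linarith)
  have hgmono : MonotoneOn g (Ioi 0) := by
    apply monotoneOn_of_deriv_nonneg (convex_Ioi 0)
    · exact fun x hx => (hg' x hx).continuousAt.continuousWithinAt
    · rw [interior_Ioi]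
      exact fun x hx => (hg' x hx).differentiableAt.differentiableWithinAt
    · rw [interior_Ioi]
      intro x hx
      rw [(hg' x hx).deriv]
      exact hg'nn x hx
  have hgQ0 : Tendsto g (𝓝[>] (0:ℝ)) (𝓝 Q0) := by
    have : Tendsto (fun ρ => Real.exp ρ) (𝓝[>] (0:ℝ)) (𝓝 1) := by
      simpa using (Real.continuous_exp.tendsto 0).mono_left nhdsWithin_le_nhds
    simpa using hQ0.mul this
  have key : ∀ ρ > (0:ℝ), Q0 ≤ g ρ := by
    intro ρ hρ
    refine le_of_tendsto hgQ0 ?_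
    filter_upwards [Ioo_mem_nhdsGT_of_mem ⟨le_refl 0, hρ⟩] with σ hσ
    exact hgmono hσ.1 hρ hσ.2.le
  intro ρ hρ
  have hQlow : Q0 * Real.exp (-ρ) ≤ Q ρ := aux_exp_shift (key ρ hρ)
  refine ⟨hQlow, ?_⟩
  -- h ρ = f ρ + Q0 * exp (-ρ) has nonnegative derivative on (0, ∞)
  set h : ℝ → ℝ := fun ρ => f ρ + Q0 * Real.exp (-ρ) with hh_def
  have hh' : ∀ x ∈ Ioi (0:ℝ), HasDerivAt h (Q x + Q0 * (-Real.exp (-x))) x := by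
    intro x hx
    have e1 : HasDerivAt (fun y : ℝ => Real.exp (-y)) (-Real.exp (-x)) x := by
      simpa using (hasDerivAt_neg' x).exp
    exact (hf x hx).add ((e1.const_mul Q0))
  have hhmono : MonotoneOn h (Ioi 0) := by
    apply monotoneOn_of_deriv_nonneg (convex_Ioi 0)
    · exact fun x hx => (hh' x hx).continuousAt.continuousWithinAt
    · rw [interior_Ioi]
      exact fun x hx => (hh' x hx).differentiableAt.differentiableWithinAt
    · rw [interior_Ioi]
      intro x hx
      rw [(hh' x hx).deriv]
      have hx' : Q0 * Real.exp (-x) ≤ Q x := aux_exp_shift (key x hx)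
      nlinarith
  have hhf0 : Tendsto h (𝓝[>] (0:ℝ)) (𝓝 (f0 + Q0)) := by
    have : Tendsto (fun ρ => Real.exp (-ρ)) (𝓝[>] (0:ℝ)) (𝓝 1) := by
      have : Tendsto (fun ρ : ℝ => Real.exp (-ρ)) (𝓝 (0:ℝ)) (𝓝 (Real.exp (-0))) :=
        (Real.continuous_exp.comp continuous_neg).tendsto 0
      simpa using this.mono_left nhdsWithin_le_nhds
    simpa using hf0.add (this.const_mul Q0)
  have : f0 + Q0 ≤ h ρ := by
    refine le_of_tendsto hhf0 ?_
    filter_upwards [Ioo_mem_nhdsGT_of_mem ⟨le_refl 0, hρ⟩] with σ hσ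
    exact hhmono hσ.1 hρ hσ.2.le
  rw [hh_def] at this
  simp only at this
  nlinarith [Real.exp_pos (-ρ)]
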